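/- For every dimension N ≥ 1, every degree k ∈ ℕ, every δ > 0, and all exponents q, m ∈ [1, +∞] (with the convention 1/∞ = 0), there exists a constant M ≥ 1 depending only on N, k, δ, q and m such that: for every bounded measurable set U ⊆ ℝ^N of positive Lebesgue measure |U| and diameter h_U > 0 satisfying the δ-ball condition, and every polynomial w : ℝ^N → ℝ of total degree at most k, one has M^{-1} · |U|^{1/q − 1/m} · ‖w‖_{L^m(U)} ≤ ‖w‖_{L^q(U)} ≤ M · |U|^{1/q − 1/m} · ‖w‖_{L^m(U)}. In particular, for m < q this is a reverse Lebesgue embedding, bounding the higher-exponent norm by the lower-exponent norm. -/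

import Mathlib

open MeasureTheory Metric
open scoped ENNReal

noncomputable section

/-- `w : ℝ^N → ℝ` is (given by) a multivariate polynomial of total degree at most `k`. -/
def IsPolyDegLE (N k : ℕ) (w : EuclideanSpace ℝ (Fin N) → ℝ) : Prop :=
  ∃ P : MvPolynomial (Fin N) ℝ, P.totalDegree ≤ k ∧ ∀ x, w x = MvPolynomial.eval (fun i => x i) P

open MvPolynomial
open scoped Pointwise

set_option maxHeartbeats 1000000
set_option synthInstance.maxHeartbeats 400000

abbrev Euc (N : ℕ) := EuclideanSpace ℝ (Fin N)

def ev {N : ℕ} (P : MvPolynomial (Fin N) ℝ) (y : Euc N) : ℝ :=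
  MvPolynomial.eval (fun i => y i) P

lemma comp_affine {N : ℕ} (P : MvPolynomial (Fin N) ℝ) (c : Fin N → ℝ) (s : ℝ) :
    ∃ Q : MvPolynomial (Fin N) ℝ, Q.totalDegree ≤ P.totalDegree ∧
      ∀ x : Fin N → ℝ, MvPolynomial.eval x Q = MvPolynomial.eval (fun i => c i + s * x i) P := by
  refine ⟨MvPolynomial.bind₁ (fun i => MvPolynomial.C (c i) + MvPolynomial.C s * MvPolynomial.X i) P, ?_, ?_⟩
  · set g : Fin N → MvPolynomial (Fin N) ℝ := fun i => C (c i) + C s * X i with hg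
    have hgdeg : ∀ i, (g i).totalDegree ≤ 1 := by
      intro i
      refine (totalDegree_add _ _).trans ?_
      simp only [totalDegree_C, max_le_iff]
      refine ⟨Nat.zero_le 1, (totalDegree_mul _ _).trans ?_⟩
      simp [totalDegree_C, totalDegree_X]
    conv_lhs => rw [← support_sum_monomial_coeff P]
    rw [map_sum]
    refine (totalDegree_finset_sum _ _).trans ?_
    refine Finset.sup_le fun d hd => ?_
    rw [bind₁_monomial]
    refine (totalDegree_mul _ _).trans ?_
    rw [totalDegree_C, zero_add]
    refine (totalDegree_finset_prod _ _).trans ?_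
    have step : ∀ i ∈ d.support, (g i ^ d i).totalDegree ≤ d i := fun i _ =>
      (totalDegree_pow _ _).trans (le_trans (Nat.mul_le_mul_left (d i) (hgdeg i)) (by simp))
    refine le_trans (Finset.sum_le_sum step) ?_
    exact le_trans (le_of_eq rfl) (le_totalDegree hd)
  · intro x
    rw [show (MvPolynomial.eval x : MvPolynomial (Fin N) ℝ →+* ℝ) = eval₂Hom (RingHom.id ℝ) x from rfl,
      eval₂Hom_bind₁]
    simp

lemma analytic_ev {N : ℕ} (P : MvPolynomial (Fin N) ℝ) :
    AnalyticOnNhd ℝ (ev P) Set.univ := by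
  have := AnalyticOnNhd.eval_continuousLinearMap
    (𝕜 := ℝ) (E := Euc N) (σ := Fin N) (B := ℝ)
    ((PiLp.continuousLinearEquiv 2 ℝ (fun _ : Fin N => ℝ)) : Euc N →L[ℝ] (Fin N → ℝ)) P
  convert this using 2 <;> rfl

lemma continuous_ev {N : ℕ} (P : MvPolynomial (Fin N) ℝ) : Continuous (ev P) := by
  rw [← continuousOn_univ]
  exact (analytic_ev P).continuousOn

lemma eq_zero_of_ev_zero_on_ball {N : ℕ} {P : MvPolynomial (Fin N) ℝ} {δ : ℝ} (hδ : 0 < δ)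
    (h : ∀ y ∈ ball (0 : Euc N) δ, ev P y = 0) : P = 0 := by
  have h0 : ev P =ᶠ[nhds (0 : Euc N)] 0 :=
    Filter.eventuallyEq_of_mem (ball_mem_nhds _ hδ) h
  have hz : Set.EqOn (ev P) 0 Set.univ :=
    (analytic_ev P).eqOn_zero_of_preconnected_of_eventuallyEq_zero
      isPreconnected_univ (Set.mem_univ 0) h0
  apply MvPolynomial.funext
  intro x
  have := hz (Set.mem_univ ((EuclideanSpace.equiv (Fin N) ℝ).symm x))
  simpa [ev] using this

lemma core (N k : ℕ) {δ : ℝ} (hδ : 0 < δ) :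
    ∃ C : ℝ, 0 < C ∧ ∀ P : MvPolynomial (Fin N) ℝ, P.totalDegree ≤ k →
      ∀ y ∈ closedBall (0 : Euc N) 1,
        |ev P y| ≤ C * ∫ z in closedBall (0 : Euc N) δ, |ev P z| := by
  classical
  set V := MvPolynomial.restrictTotalDegree (Fin N) ℝ k with hV
  haveI : Module.Finite ℝ V := inferInstance
  haveI : Nontrivial V := by
    refine ⟨⟨1, ?_⟩, 0, ?_⟩
    · rw [MvPolynomial.mem_restrictTotalDegree]
      simp
    · intro hcon
      have : (1 : MvPolynomial (Fin N) ℝ) = 0 := congrArg Subtype.val hcon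
      exact one_ne_zero this
  set d := Module.finrank ℝ V with hd
  have hd0 : 0 < d := Module.finrank_pos
  haveI : Nonempty (Fin d) := ⟨⟨0, hd0⟩⟩
  set b : Module.Basis (Fin d) ℝ V := Module.finBasis ℝ V with hb
  -- expansion of ev over the basis
  have expand : ∀ (c : Fin d → ℝ) (z : Euc N),
      ev ((b.equivFun.symm c : V) : MvPolynomial (Fin N) ℝ) z
        = ∑ i, c i * ev ((b i : V) : MvPolynomial (Fin N) ℝ) z := by
    intro c z
    rw [Module.Basis.equivFun_symm_apply]
    show MvPolynomial.eval _ _ = _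
    rw [Submodule.coe_sum]
    rw [map_sum]
    refine Finset.sum_congr rfl fun i _ => ?_
    rw [Submodule.coe_smul, MvPolynomial.smul_eval]
    rfl
  -- integrability
  have integ : ∀ P : MvPolynomial (Fin N) ℝ,
      IntegrableOn (fun z => |ev P z|) (closedBall (0 : Euc N) δ) volume :=
    fun P => ((continuous_ev P).abs.continuousOn).integrableOn_compact (isCompact_closedBall _ _)
  -- the "denominator" function
  set A : (Fin d → ℝ) → ℝ :=
    fun c => ∫ z in closedBall (0 : Euc N) δ, |ev ((b.equivFun.symm c : V) : MvPolynomial (Fin N) ℝ) z|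
    with hA
  have hAnonneg : ∀ c, 0 ≤ A c := fun c => integral_nonneg (fun z => abs_nonneg _)
  -- A is bounded by a multiple of the norm
  set I : Fin d → ℝ := fun i => ∫ z in closedBall (0 : Euc N) δ, |ev ((b i : V) : MvPolynomial (Fin N) ℝ) z| with hI
  have hIb : ∀ c, A c ≤ (∑ i, I i) * ‖c‖ := by
    intro c
    have hle : ∀ z, |ev ((b.equivFun.symm c : V) : MvPolynomial (Fin N) ℝ) z|
        ≤ ∑ i, ‖c‖ * |ev ((b i : V) : MvPolynomial (Fin N) ℝ) z| := by
      intro z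
      rw [expand]
      refine (Finset.abs_sum_le_sum_abs _ _).trans ?_
      refine Finset.sum_le_sum fun i _ => ?_
      rw [abs_mul]
      refine mul_le_mul_of_nonneg_right ?_ (abs_nonneg _)
      simpa using norm_le_pi_norm c i
    calc A c ≤ ∫ z in closedBall (0 : Euc N) δ,
          ∑ i, ‖c‖ * |ev ((b i : V) : MvPolynomial (Fin N) ℝ) z| := by
          refine integral_mono (integ _) ?_ hle
          exact integrable_finset_sum _ fun i _ => (integ _).const_mul _
      _ = ∑ i, ‖c‖ * I i := by
          rw [integral_finset_sum _ fun i _ => (integ _).const_mul _]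
          exact Finset.sum_congr rfl fun i _ => integral_const_mul _ _
      _ = (∑ i, I i) * ‖c‖ := by
          rw [Finset.sum_mul]
          exact Finset.sum_congr rfl fun i _ => mul_comm _ _
  -- A is Lipschitz hence continuous
  have hAsub : ∀ c c', |A c - A c'| ≤ A (c - c') := by
    intro c c'
    have key : A c - A c' = ∫ z in closedBall (0 : Euc N) δ,
        (|ev ((b.equivFun.symm c : V) : MvPolynomial (Fin N) ℝ) z|
          - |ev ((b.equivFun.symm c' : V) : MvPolynomial (Fin N) ℝ) z|) :=
      (integral_sub (integ _) (integ _)).symm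
    rw [key, ← Real.norm_eq_abs]
    refine (norm_integral_le_integral_norm _).trans ?_
    refine integral_mono ((integ _).sub (integ _)).norm (integ _) ?_
    intro z
    simp only [Real.norm_eq_abs]
    refine (abs_abs_sub_abs_le_abs_sub _ _).trans (le_of_eq ?_)
    rw [map_sub, Submodule.coe_sub]
    show |MvPolynomial.eval _ _ - MvPolynomial.eval _ _| = _
    rw [← map_sub]
    rfl
  have hAcont : Continuous A := by
    have : LipschitzWith (Real.toNNReal (∑ i, I i)) A := by
      refine LipschitzWith.of_dist_le_mul fun c c' => ?_
      rw [Real.dist_eq, dist_eq_norm]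
      refine (hAsub c c').trans ((hIb _).trans ?_)
      gcongr
      exact Real.le_coe_toNNReal _
    exact this.continuous
  -- minimum of A on the unit sphere
  have hSne : (sphere (0 : Fin d → ℝ) 1).Nonempty :=
    NormedSpace.sphere_nonempty.mpr zero_le_one
  obtain ⟨c₀, hc₀S, hmin⟩ :=
    (isCompact_sphere (0 : Fin d → ℝ) 1).exists_isMinOn hSne hAcont.continuousOn
  set ε := A c₀ with hε
  have hc₀norm : ‖c₀‖ = 1 := by simpa using hc₀S
  have hεpos : 0 < ε := by
    rcases lt_or_eq_of_le (hAnonneg c₀) with h | h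
    · exact h
    · exfalso
      -- A c₀ = 0 implies the polynomial vanishes on the ball, hence is zero
      set P₀ := ((b.equivFun.symm c₀ : V) : MvPolynomial (Fin N) ℝ) with hP₀
      have hae : (fun z => |ev P₀ z|) =ᵐ[volume.restrict (closedBall (0 : Euc N) δ)] 0 := by
        refine (integral_eq_zero_iff_of_nonneg (fun z => abs_nonneg _) (integ _)).mp h.symm
      have hz : ∀ y ∈ ball (0 : Euc N) δ, ev P₀ y = 0 := by
        by_contra hcon
        push_neg at hcon
        obtain ⟨y, hy, hy0⟩ := hcon
        set O := ball (0 : Euc N) δ ∩ {z | ev P₀ z ≠ 0} with hO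
        have hOopen : IsOpen O := isOpen_ball.inter (isOpen_ne_fun (continuous_ev P₀) continuous_const)
        have hOne : O.Nonempty := ⟨y, hy, hy0⟩
        have hpos : 0 < volume O := hOopen.measure_pos volume hOne
        have h0 : volume O = 0 := by
          have h1 := (ae_restrict_iff' measurableSet_closedBall).mp hae
          rw [Filter.eventually_iff, mem_ae_iff] at h1
          refine measure_mono_null ?_ h1
          intro z hz
          simp only [Set.mem_compl_iff, Set.mem_setOf_eq]
          intro hcontra
          have hz1 : z ∈ closedBall (0 : Euc N) δ := ball_subset_closedBall hz.1
          have := hcontra hz1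
          exact hz.2 (by simpa using this)
        rw [h0] at hpos; exact lt_irrefl 0 hpos
      have : P₀ = 0 := eq_zero_of_ev_zero_on_ball hδ hz
      have hc0 : c₀ = 0 := by
        have hv : b.equivFun.symm c₀ = 0 := by
          exact Subtype.ext this
        exact (LinearEquiv.map_eq_zero_iff _).mp hv
      rw [hc0] at hc₀norm
      simp at hc₀norm
  -- pointwise bound on the unit ball for sphere coefficients
  have hB : ∀ i : Fin d, ∃ Bi : ℝ, ∀ y ∈ closedBall (0 : Euc N) 1,
      |ev ((b i : V) : MvPolynomial (Fin N) ℝ) y| ≤ Bi := by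
    intro i
    obtain ⟨Bi, hBi⟩ := (isCompact_closedBall (0 : Euc N) 1).exists_bound_of_continuousOn
      (continuous_ev _).continuousOn
    exact ⟨Bi, fun y hy => by simpa using hBi y hy⟩
  choose B hBspec using hB
  set C₀ := ∑ i, B i with hC₀
  have hnum : ∀ c : Fin d → ℝ, ‖c‖ = 1 → ∀ y ∈ closedBall (0 : Euc N) 1,
      |ev ((b.equivFun.symm c : V) : MvPolynomial (Fin N) ℝ) y| ≤ C₀ := by
    intro c hc y hy
    rw [expand]
    refine (Finset.abs_sum_le_sum_abs _ _).trans ?_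
    refine Finset.sum_le_sum fun i _ => ?_
    rw [abs_mul]
    calc |c i| * |ev ((b i : V) : MvPolynomial (Fin N) ℝ) y|
        ≤ 1 * B i := by
          refine mul_le_mul ?_ (hBspec i y hy) (abs_nonneg _) zero_le_one
          rw [← hc]; exact norm_le_pi_norm c i
      _ = B i := one_mul _
  -- final constant
  refine ⟨max 1 (C₀ / ε), lt_of_lt_of_le one_pos (le_max_left _ _), ?_⟩
  intro P hP y hy
  set v : V := ⟨P, (MvPolynomial.mem_restrictTotalDegree _ _ _).mpr hP⟩ with hv
  set c : Fin d → ℝ := b.equivFun v with hc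
  have hΦ : (b.equivFun.symm c : V) = v := b.equivFun.symm_apply_apply v
  by_cases hc0 : c = 0
  · have hv0 : v = 0 := by rw [← hΦ, hc0, map_zero]
    have hP0 : P = 0 := congrArg Subtype.val hv0
    simp [hP0, ev]
  · set t := ‖c‖ with ht
    have htpos : 0 < t := norm_pos_iff.mpr hc0
    set c' : Fin d → ℝ := t⁻¹ • c with hc'
    have hc'norm : ‖c'‖ = 1 := by
      rw [hc', norm_smul, norm_inv, norm_norm, ← ht, inv_mul_cancel₀ htpos.ne']
    have hrel : ∀ z : Euc N, ev P z = t * ev ((b.equivFun.symm c' : V) : MvPolynomial (Fin N) ℝ) z := by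
      intro z
      have h1 : (b.equivFun.symm c : V) = t • (b.equivFun.symm c' : V) := by
        rw [hc', _root_.map_smul, smul_smul, mul_inv_cancel₀ htpos.ne', one_smul]
      have h2 : P = ((b.equivFun.symm c : V) : MvPolynomial (Fin N) ℝ) := by rw [hΦ]
      rw [h2, h1, Submodule.coe_smul]
      show MvPolynomial.eval _ _ = _
      rw [MvPolynomial.smul_eval]
      rfl
    have hnum' : |ev P y| ≤ t * C₀ := by
      rw [hrel y, abs_mul, abs_of_pos htpos]
      exact mul_le_mul_of_nonneg_left (hnum c' hc'norm y hy) htpos.le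
    have hACP : A c = ∫ z in closedBall (0 : Euc N) δ, |ev P z| := by
      rw [hA]
      refine integral_congr_ae (Filter.Eventually.of_forall fun z => ?_)
      show |ev ((b.equivFun.symm c : V) : MvPolynomial (Fin N) ℝ) z| = |ev P z|
      rw [hΦ]
    have hAc : A c = t * A c' := by
      rw [hACP, hA]
      simp only
      rw [← integral_const_mul]
      refine integral_congr_ae (Filter.Eventually.of_forall fun z => ?_)
      show |ev P z| = t * |ev ((b.equivFun.symm c' : V) : MvPolynomial (Fin N) ℝ) z|
      rw [hrel z, abs_mul, abs_of_pos htpos]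
    have hden : t * ε ≤ ∫ z in closedBall (0 : Euc N) δ, |ev P z| := by
      have hAc' : ε ≤ A c' := hmin (by simpa using hc'norm)
      rw [← hACP, hAc]
      exact mul_le_mul_of_nonneg_left hAc' htpos.le
    have hC₀nonneg : 0 ≤ C₀ := by
      refine Finset.sum_nonneg fun i _ => ?_
      exact le_trans (abs_nonneg _) (hBspec i 0 (mem_closedBall_self zero_le_one))
    calc |ev P y| ≤ t * C₀ := hnum'
      _ = (C₀ / ε) * (t * ε) := by field_simp
      _ ≤ (C₀ / ε) * ∫ z in closedBall (0 : Euc N) δ, |ev P z| :=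
          mul_le_mul_of_nonneg_left hden (div_nonneg hC₀nonneg hεpos.le)
      _ ≤ max 1 (C₀ / ε) * ∫ z in closedBall (0 : Euc N) δ, |ev P z| :=
          mul_le_mul_of_nonneg_right (le_max_right _ _)
            (integral_nonneg fun z => abs_nonneg _)

lemma expo_eq (p : ℝ≥0∞) : (p⁻¹).toReal = 1 / p.toReal := by
  rw [ENNReal.toReal_inv, one_div]

lemma key_one_sided (N k : ℕ) {δ : ℝ} (hδ : 0 < δ) (q m : ℝ≥0∞) (hq : 1 ≤ q) (hm : 1 ≤ m) :
    ∃ M : ℝ, 1 ≤ M ∧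
      ∀ U : Set (Euc N), Bornology.IsBounded U → MeasurableSet U → 0 < volume U →
        0 < Metric.diam U → (∃ x, closedBall x (δ * Metric.diam U) ⊆ U) →
        ∀ w : Euc N → ℝ, IsPolyDegLE N k w →
          eLpNorm w q (volume.restrict U)
            ≤ ENNReal.ofReal M * volume U ^ ((q⁻¹).toReal - (m⁻¹).toReal)
              * eLpNorm w m (volume.restrict U) := by
  obtain ⟨C, hCpos, hcore⟩ := core N k hδ
  set κ : ℝ≥0∞ := volume (closedBall (0 : Euc N) 1) with hκ
  have hκfin : κ ≠ ⊤ := (measure_closedBall_lt_top).ne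
  refine ⟨max 1 (C * κ.toReal), le_max_left _ _, ?_⟩
  intro U hUb hUm hU0 hUd hball w hw
  obtain ⟨P, hPdeg, hPw⟩ := hw
  obtain ⟨x, hxU⟩ := hball
  have hwc : Continuous w := by
    have : w = ev P := funext fun y => hPw y
    rw [this]; exact continuous_ev P
  have hmeas : AEStronglyMeasurable w (volume.restrict U) :=
    hwc.aestronglyMeasurable.restrict
  have hUfin : volume U ≠ ⊤ := hUb.measure_lt_top.ne
  have hin : ∀ p : ℝ≥0∞, (p⁻¹).toReal = 1 / p.toReal := expo_eq
  rcases le_or_gt q m with hqm | hmq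
  · -- easy direction: plain embedding
    have := eLpNorm_le_eLpNorm_mul_rpow_measure_univ hqm hmeas
    rw [Measure.restrict_apply_univ] at this
    refine this.trans ?_
    rw [hin q, hin m]
    calc eLpNorm w m (volume.restrict U) * volume U ^ (1 / q.toReal - 1 / m.toReal)
        = 1 * volume U ^ (1 / q.toReal - 1 / m.toReal) * eLpNorm w m (volume.restrict U) := by ring
      _ ≤ ENNReal.ofReal (max 1 (C * κ.toReal)) * volume U ^ (1 / q.toReal - 1 / m.toReal)
            * eLpNorm w m (volume.restrict U) := by
          gcongr
          rw [show (1 : ℝ≥0∞) = ENNReal.ofReal 1 by simp]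
          exact ENNReal.ofReal_le_ofReal (le_max_left _ _)
  · -- hard direction
    have hmtop : m ≠ ⊤ := (hmq.trans_le le_top).ne
    set h : ℝ := Metric.diam U with hh
    have hhpos : 0 < h := hUd
    have hxmem : x ∈ U := hxU (mem_closedBall_self (by positivity))
    have hUsub : U ⊆ closedBall x h := fun u hu =>
      mem_closedBall.mpr (Metric.dist_le_diam_of_mem hUb hu hxmem)
    obtain ⟨Q, hQdeg, hQev⟩ := comp_affine P (fun i => x i) h
    have hQw : ∀ z : Euc N, ev Q z = w (x + h • z) := by
      intro z
      rw [hPw]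
      show MvPolynomial.eval _ Q = _
      rw [hQev]
      have hfeq : (fun i => x i + h * z i) = (fun i => (x + h • z) i) := by
        funext i
        simp [PiLp.add_apply, PiLp.smul_apply, smul_eq_mul]
      rw [hfeq]
    -- integrability of |w| on U
    have hwint : IntegrableOn w U volume :=
      ((hwc.continuousOn).integrableOn_compact hUb.isCompact_closure).mono_set subset_closure
    have hwabsint : IntegrableOn (fun u => |w u|) U volume := hwint.abs
    set J : ℝ := ∫ u in U, |w u| with hJ
    have hJnonneg : 0 ≤ J := integral_nonneg fun u => abs_nonneg _
    -- change of variables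
    have hCoV : ∫ z in closedBall (0 : Euc N) δ, |ev Q z|
        = (h ^ N)⁻¹ * ∫ u in closedBall x (h * δ), |w u| := by
      have e1 : ∀ z : Euc N, |ev Q z| = (fun v => |w (x + v)|) (h • z) := by
        intro z; rw [hQw]
      calc ∫ z in closedBall (0 : Euc N) δ, |ev Q z|
          = ∫ z in closedBall (0 : Euc N) δ, (fun v => |w (x + v)|) (h • z) :=
            integral_congr_ae (Filter.Eventually.of_forall fun z => e1 z)
        _ = (h ^ N)⁻¹ • ∫ v in (h • closedBall (0 : Euc N) δ : Set (Euc N)), |w (x + v)| := by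
            have hcv := Measure.setIntegral_comp_smul_of_pos volume
              (fun v => |w (x + v)|) (closedBall (0 : Euc N) δ) hhpos
            rw [finrank_euclideanSpace_fin] at hcv
            exact hcv
        _ = (h ^ N)⁻¹ • ∫ v in closedBall (0 : Euc N) (h * δ), |w (x + v)| := by
            rw [_root_.smul_closedBall _ _ hδ.le, smul_zero, Real.norm_eq_abs,
              abs_of_pos hhpos]
        _ = (h ^ N)⁻¹ * ∫ u in closedBall x (h * δ), |w u| := by
            rw [smul_eq_mul]
            congr 1
            have hpre : (fun v => x + v) ⁻¹' closedBall x (h * δ)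
                = closedBall (0 : Euc N) (h * δ) := by
              ext v
              simp [mem_closedBall, dist_eq_norm]
            rw [← hpre]
            exact (measurePreserving_add_left volume x).setIntegral_preimage_emb
              (measurableEmbedding_addLeft x) (fun u => |w u|) (closedBall x (h * δ))
    -- pointwise bound
    have hpt : ∀ u ∈ U, |w u| ≤ C * ((h ^ N)⁻¹ * J) := by
      intro u hu
      have hd : dist u x ≤ h := Metric.dist_le_diam_of_mem hUb hu hxmem
      set y : Euc N := h⁻¹ • (u - x) with hy
      have hymem : y ∈ closedBall (0 : Euc N) 1 := by
        rw [mem_closedBall, dist_zero_right, hy, norm_smul, norm_inv, Real.norm_eq_abs,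
          abs_of_pos hhpos]
        rw [dist_eq_norm] at hd
        calc h⁻¹ * ‖u - x‖ ≤ h⁻¹ * h := by gcongr
          _ = 1 := inv_mul_cancel₀ hhpos.ne'
      have huy : u = x + h • y := by
        rw [hy, smul_smul, mul_inv_cancel₀ hhpos.ne', one_smul]
        abel
      have h1 : w u = ev Q y := by rw [hQw y, ← huy]
      have h2 := hcore Q (hQdeg.trans hPdeg) y hymem
      rw [h1]
      refine h2.trans ?_
      rw [hCoV]
      have hsub : closedBall x (h * δ) ⊆ U := by rw [mul_comm]; exact hxU
      have hmono : ∫ u in closedBall x (h * δ), |w u| ≤ J := by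
        rw [hJ]
        exact setIntegral_mono_set hwabsint
          (Filter.Eventually.of_forall fun u => by simpa using abs_nonneg (w u))
          (HasSubset.Subset.eventuallyLE hsub)
      gcongr
    -- eLpNorm chain
    have hq_top : eLpNorm w ⊤ (volume.restrict U) ≤ ENNReal.ofReal (C * ((h ^ N)⁻¹ * J)) := by
      rw [eLpNorm_exponent_top]
      refine eLpNormEssSup_le_of_ae_bound ?_
      refine (ae_restrict_iff' hUm).mpr (Filter.Eventually.of_forall fun u hu => ?_)
      rw [Real.norm_eq_abs]
      exact hpt u hu
    have step1 : eLpNorm w q (volume.restrict U)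
        ≤ eLpNorm w ⊤ (volume.restrict U) * volume U ^ (1 / q.toReal) := by
      have := eLpNorm_le_eLpNorm_mul_rpow_measure_univ (le_top : q ≤ ⊤) hmeas
      rw [Measure.restrict_apply_univ] at this
      simpa using this
    have step2 : ENNReal.ofReal J ≤ eLpNorm w m (volume.restrict U)
        * volume U ^ (1 - 1 / m.toReal) := by
      have hJe : ENNReal.ofReal J = eLpNorm w 1 (volume.restrict U) := by
        rw [eLpNorm_one_eq_lintegral_enorm, hJ]
        exact ofReal_integral_norm_eq_lintegral_enorm hwint
      rw [hJe]
      have := eLpNorm_le_eLpNorm_mul_rpow_measure_univ hm hmeas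
      rw [Measure.restrict_apply_univ] at this
      simpa using this
    have hUle : volume U ≤ ENNReal.ofReal (h ^ N) * κ := by
      calc volume U ≤ volume (closedBall x h) := measure_mono hUsub
        _ = ENNReal.ofReal (h ^ N) * κ := by
          rw [Measure.addHaar_closedBall' volume x hhpos.le, finrank_euclideanSpace_fin]
    calc eLpNorm w q (volume.restrict U)
        ≤ ENNReal.ofReal (C * ((h ^ N)⁻¹ * J)) * volume U ^ (1 / q.toReal) :=
          step1.trans (by gcongr)
      _ = ENNReal.ofReal C * ENNReal.ofReal (h ^ N)⁻¹ * ENNReal.ofReal J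
            * volume U ^ (1 / q.toReal) := by
          rw [ENNReal.ofReal_mul hCpos.le, ENNReal.ofReal_mul (by positivity)]
          ring
      _ ≤ ENNReal.ofReal C * ENNReal.ofReal (h ^ N)⁻¹
            * (eLpNorm w m (volume.restrict U) * volume U ^ (1 - 1 / m.toReal))
            * volume U ^ (1 / q.toReal) := by gcongr
      _ = ENNReal.ofReal C * ENNReal.ofReal (h ^ N)⁻¹ * volume U
            * volume U ^ (1 / q.toReal - 1 / m.toReal)
            * eLpNorm w m (volume.restrict U) := by
          rw [show (1 : ℝ) - 1 / m.toReal = 1 + (- (1/m.toReal)) by ring,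
            ENNReal.rpow_add _ _ (hU0.ne') hUfin, ENNReal.rpow_one,
            show (1 : ℝ) / q.toReal - 1 / m.toReal = 1/q.toReal + (-(1/m.toReal)) by ring,
            ENNReal.rpow_add _ _ (hU0.ne') hUfin]
          ring
      _ ≤ ENNReal.ofReal C * ENNReal.ofReal (h ^ N)⁻¹ * (ENNReal.ofReal (h ^ N) * κ)
            * volume U ^ (1 / q.toReal - 1 / m.toReal)
            * eLpNorm w m (volume.restrict U) := by gcongr
      _ = ENNReal.ofReal C * κ * volume U ^ (1 / q.toReal - 1 / m.toReal)
            * eLpNorm w m (volume.restrict U) := by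
          rw [show ENNReal.ofReal C * ENNReal.ofReal (h ^ N)⁻¹ * (ENNReal.ofReal (h ^ N) * κ)
              = ENNReal.ofReal C * (ENNReal.ofReal (h ^ N)⁻¹ * ENNReal.ofReal (h ^ N)) * κ by ring,
            ← ENNReal.ofReal_mul (by positivity), inv_mul_cancel₀ (by positivity)]
          simp
      _ ≤ ENNReal.ofReal (max 1 (C * κ.toReal)) * volume U ^ (1 / q.toReal - 1 / m.toReal)
            * eLpNorm w m (volume.restrict U) := by
          gcongr
          calc ENNReal.ofReal C * κ = ENNReal.ofReal (C * κ.toReal) := by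
                rw [ENNReal.ofReal_mul hCpos.le, ENNReal.ofReal_toReal hκfin]
            _ ≤ ENNReal.ofReal (max 1 (C * κ.toReal)) :=
                ENNReal.ofReal_le_ofReal (le_max_right _ _)
      _ = ENNReal.ofReal (max 1 (C * κ.toReal)) * volume U ^ ((q⁻¹).toReal - (m⁻¹).toReal)
            * eLpNorm w m (volume.restrict U) := by rw [hin q, hin m]

/-- Direct and reverse Lebesgue embeddings on local polynomial spaces:
`‖w‖_{L^q(U)} ≈ |U|^{1/q - 1/m} ‖w‖_{L^m(U)}` uniformly over sets `U` satisfying the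
`δ`-ball condition. -/
theorem direct_and_reverse_lebesgue_embeddings
    (N k : ℕ) (hN : 1 ≤ N) (δ : ℝ) (hδ : 0 < δ) (q m : ℝ≥0∞) (hq : 1 ≤ q) (hm : 1 ≤ m) :
    ∃ M : ℝ, 1 ≤ M ∧
      ∀ U : Set (EuclideanSpace ℝ (Fin N)),
        Bornology.IsBounded U → MeasurableSet U → 0 < volume U → 0 < Metric.diam U →
        (∃ x, Metric.closedBall x (δ * Metric.diam U) ⊆ U) →
        ∀ w : EuclideanSpace ℝ (Fin N) → ℝ, IsPolyDegLE N k w →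
          (ENNReal.ofReal M)⁻¹ * volume U ^ ((q⁻¹).toReal - (m⁻¹).toReal) *
              eLpNorm w m (volume.restrict U)
            ≤ eLpNorm w q (volume.restrict U) ∧
          eLpNorm w q (volume.restrict U)
            ≤ ENNReal.ofReal M * volume U ^ ((q⁻¹).toReal - (m⁻¹).toReal) *
              eLpNorm w m (volume.restrict U) := by
  obtain ⟨M₁, hM₁, h₁⟩ := key_one_sided N k hδ q m hq hm
  obtain ⟨M₂, hM₂, h₂⟩ := key_one_sided N k hδ m q hm hq
  set M := max M₁ M₂ with hM
  have hMone : 1 ≤ M := hM₁.trans (le_max_left _ _)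
  have hMne0 : ENNReal.ofReal M ≠ 0 := by
    simp only [ne_eq, ENNReal.ofReal_eq_zero, not_le]
    linarith
  have hMnetop : ENNReal.ofReal M ≠ ⊤ := ENNReal.ofReal_ne_top
  refine ⟨M, hMone, ?_⟩
  intro U hUb hUm hU0 hUd hball w hw
  have hUfin : volume U ≠ ⊤ := hUb.measure_lt_top.ne
  set a : ℝ := (q⁻¹).toReal - (m⁻¹).toReal with ha
  have hcancel : volume U ^ a * volume U ^ (-a) = 1 := by
    rw [← ENNReal.rpow_add _ _ hU0.ne' hUfin, add_neg_cancel, ENNReal.rpow_zero]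
  constructor
  · have h2 := h₂ U hUb hUm hU0 hUd hball w hw
    have hexp : (m⁻¹).toReal - (q⁻¹).toReal = -a := by rw [ha]; ring
    rw [hexp] at h2
    calc (ENNReal.ofReal M)⁻¹ * volume U ^ a * eLpNorm w m (volume.restrict U)
        ≤ (ENNReal.ofReal M)⁻¹ * volume U ^ a
            * (ENNReal.ofReal M₂ * volume U ^ (-a) * eLpNorm w q (volume.restrict U)) := by
          gcongr
      _ = ((ENNReal.ofReal M)⁻¹ * ENNReal.ofReal M₂) * (volume U ^ a * volume U ^ (-a))
            * eLpNorm w q (volume.restrict U) := by ring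
      _ ≤ ((ENNReal.ofReal M)⁻¹ * ENNReal.ofReal M) * (volume U ^ a * volume U ^ (-a))
            * eLpNorm w q (volume.restrict U) := by
          gcongr
          exact le_max_right _ _
      _ = eLpNorm w q (volume.restrict U) := by
          rw [ENNReal.inv_mul_cancel hMne0 hMnetop, hcancel, one_mul, one_mul]
  · refine (h₁ U hUb hUm hU0 hUd hball w hw).trans ?_
    gcongr
    exact le_max_left _ _
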